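/- For all k > 0, the second derivative (k·c(k))'' of the gravity wave dispersion is strictly negative, where c(k) = sqrt(tanh(k)/k). That is, the group velocity is strictly decreasing, so i₁(k) := (k·c(k))'' < 0 for all k > 0. -/

import Mathlib

noncomputable def cww (k : ℝ) : ℝ := Real.sqrt (Real.tanh k / k)

open Real

lemma hasDerivAt_tanh' (x : ℝ) : HasDerivAt Real.tanh (1 - Real.tanh x ^ 2) x := by
  have h := (Real.hasDerivAt_sinh x).div (Real.hasDerivAt_cosh x)
    (ne_of_gt (Real.cosh_pos x))
  have hfun : Real.tanh = fun y => Real.sinh y / Real.cosh y := by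
    funext y; exact Real.tanh_eq_sinh_div_cosh y
  have hc := Real.cosh_pos x
  have heq : (1 - Real.tanh x ^ 2)
      = (Real.cosh x * Real.cosh x - Real.sinh x * Real.sinh x) / Real.cosh x ^ 2 := by
    rw [Real.tanh_eq_sinh_div_cosh]
    field_simp
  rw [heq, hfun]
  exact h

/-- g(k) = k * tanh k -/
lemma hasDerivAt_g (x : ℝ) :
    HasDerivAt (fun k => k * Real.tanh k)
      (Real.tanh x + x * (1 - Real.tanh x ^ 2)) x := by
  exact ((hasDerivAt_id' x).mul (hasDerivAt_tanh' x)).congr_deriv (by ring)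

lemma tanh_pos' {x : ℝ} (hx : 0 < x) : 0 < Real.tanh x := by
  rw [Real.tanh_eq_sinh_div_cosh]
  exact div_pos (Real.sinh_pos_iff.mpr hx) (Real.cosh_pos x)

lemma tanh_lt_one' (x : ℝ) : Real.tanh x < 1 := by
  rw [Real.tanh_eq_sinh_div_cosh]
  rw [div_lt_one (Real.cosh_pos x)]
  nlinarith [Real.cosh_sq_sub_sinh_sq x, Real.cosh_pos x,
    abs_nonneg (Real.sinh x), neg_abs_le (Real.sinh x), le_abs_self (Real.sinh x)]

/-- F(k) = sqrt (k tanh k) -/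
noncomputable def Fw (k : ℝ) : ℝ := Real.sqrt (k * Real.tanh k)

/-- explicit first derivative of F on (0,∞) -/
noncomputable def Pw (k : ℝ) : ℝ :=
  (Real.tanh k + k * (1 - Real.tanh k ^ 2)) / (2 * Real.sqrt (k * Real.tanh k))

lemma g_pos {x : ℝ} (hx : 0 < x) : 0 < x * Real.tanh x :=
  mul_pos hx (tanh_pos' hx)

lemma hasDerivAt_Fw {x : ℝ} (hx : 0 < x) : HasDerivAt Fw (Pw x) x := by
  have hg := hasDerivAt_g x
  have hgx : x * Real.tanh x ≠ 0 := ne_of_gt (g_pos hx)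
  have h := (Real.hasDerivAt_sqrt hgx).comp x hg
  refine h.congr_deriv ?_
  unfold Pw
  field_simp

theorem i1_neg : ∀ k : ℝ, 0 < k →
    deriv (deriv (fun k => k * cww k)) k < 0 := by
  intro k hk
  -- On (0,∞), k * cww k = Fw k
  have hOpen : IsOpen (Set.Ioi (0:ℝ)) := isOpen_Ioi
  have hmem : k ∈ Set.Ioi (0:ℝ) := hk
  have hEqOn : ∀ x ∈ Set.Ioi (0:ℝ), x * cww x = Fw x := by
    intro x hx
    rw [Set.mem_Ioi] at hx
    unfold cww Fw
    rw [show x * Real.tanh x = x ^ 2 * (Real.tanh x / x) by field_simp,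
      Real.sqrt_mul (sq_nonneg x), Real.sqrt_sq hx.le]
  have hnhds : (fun x => x * cww x) =ᶠ[nhds k] Fw := by
    filter_upwards [hOpen.mem_nhds hmem] with x hx using hEqOn x hx
  have hd1 : deriv (fun x => x * cww x) =ᶠ[nhds k] deriv Fw := hnhds.deriv
  -- deriv Fw = Pw on a neighborhood of k
  have hd2 : deriv Fw =ᶠ[nhds k] Pw := by
    filter_upwards [hOpen.mem_nhds hmem] with x hx
    exact (hasDerivAt_Fw hx).deriv
  have hkey : deriv (deriv (fun x => x * cww x)) k = deriv Pw k := by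
    rw [(hd1.trans hd2).deriv_eq]
  rw [hkey]
  -- Now compute deriv Pw k via quotient rule
  set t := Real.tanh k with ht
  have ht0 : 0 < t := tanh_pos' hk
  have ht1 : t < 1 := tanh_lt_one' k
  set s := Real.sqrt (k * t) with hs
  have hgpos : 0 < k * t := mul_pos hk ht0
  have hs0 : 0 < s := Real.sqrt_pos.mpr hgpos
  have hs2 : s ^ 2 = k * t := Real.sq_sqrt hgpos.le
  -- numerator N x = tanh x + x*(1 - tanh x^2), derivative:
  have hN : HasDerivAt (fun x => Real.tanh x + x * (1 - Real.tanh x ^ 2))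
      ((1 - t ^ 2) + ((1 - t ^ 2) + k * (-(2 * t * (1 - t ^ 2))))) k := by
    have h1 := hasDerivAt_tanh' k
    have h2 : HasDerivAt (fun x => 1 - Real.tanh x ^ 2)
        (-(2 * t * (1 - t ^ 2))) k := by
      have := ((hasDerivAt_tanh' k).pow 2).const_sub 1
      refine this.congr_deriv ?_
      push_cast
      ring
    have h3 := (hasDerivAt_id k).mul h2
    have := h1.add h3
    simp only [id_eq] at this
    refine this.congr_deriv ?_
    ring
  -- denominator D x = 2 * sqrt (x * tanh x), derivative:
  have hD : HasDerivAt (fun x => 2 * Real.sqrt (x * Real.tanh x))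
      (2 * (1 / (2 * s) * (t + k * (1 - t ^ 2)))) k := by
    have hg := hasDerivAt_g k
    have hgx : k * Real.tanh k ≠ 0 := ne_of_gt hgpos
    have h := ((Real.hasDerivAt_sqrt hgx).comp k hg).const_mul 2
    exact h
  have hDne : 2 * Real.sqrt (k * Real.tanh k) ≠ 0 := by
    rw [← ht, ← hs]; positivity
  have hP : HasDerivAt Pw
      ((((1 - t ^ 2) + ((1 - t ^ 2) + k * (-(2 * t * (1 - t ^ 2))))) * (2 * s)
        - (t + k * (1 - t ^ 2)) * (2 * (1 / (2 * s) * (t + k * (1 - t ^ 2)))))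
        / (2 * s) ^ 2) k := by
    have := hN.div hD hDne
    exact this
  rw [hP.deriv]
  -- sign analysis
  rw [div_neg_iff]
  right
  constructor
  · -- numerator < 0
    have hns : s ≠ 0 := ne_of_gt hs0
    have hnum : (((1 - t ^ 2) + ((1 - t ^ 2) + k * (-(2 * t * (1 - t ^ 2))))) * (2 * s)
        - (t + k * (1 - t ^ 2)) * (2 * (1 / (2 * s) * (t + k * (1 - t ^ 2)))))
        = (2 * s ^ 2 * ((1 - t ^ 2) + ((1 - t ^ 2) + k * (-(2 * t * (1 - t ^ 2)))))
          - (t + k * (1 - t ^ 2)) ^ 2) / s := by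
      field_simp
    rw [hnum, hs2]
    apply div_neg_of_neg_of_pos _ hs0
    nlinarith [sq_nonneg (t - k * (1 - t ^ 2)), mul_pos (mul_pos hk hk) (mul_pos ht0 ht0),
      sub_pos.mpr (show t ^ 2 < 1 by nlinarith)]
  · positivity
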